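/- Let p be a prime, let G be a finite group, let N = O_p(G) be the largest normal p-subgroup of G, and let P be a Sylow p-subgroup of G. If |P : N| ≤ p^b and p^{a+1} does not divide |C| for every conjugacy class C of G, then every conjugacy class of P has size at most p^{a+b}; in particular b*(P) ≤ p^{a+b}. -/

import Mathlib

open CategoryTheory

open Subgroup

lemma conjClass_card_eq_index {G : Type*} [Group G] [Finite G] (x : G) :
    Nat.card {y : G // IsConj x y} = (Subgroup.centralizer {x}).index := by
  have e1 : {y : G // IsConj x y} ≃ MulAction.orbit (ConjAct G) x :=
    Equiv.subtypeEquivRight fun y => isConj_comm.trans ConjAct.mem_orbit_conjAct.symm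
  have e2 := MulAction.orbitEquivQuotientStabilizer (ConjAct G) x
  have h1 : Nat.card {y : G // IsConj x y} = (MulAction.stabilizer (ConjAct G) x).index := by
    rw [Nat.card_congr (e1.trans e2)]; rfl
  have hc := Subgroup.nat_card_centralizer_nat_card_stabilizer (g := x)
  have h2 := Subgroup.card_mul_index (Subgroup.centralizer {x})
  have h3 := Subgroup.card_mul_index (MulAction.stabilizer (ConjAct G) x)
  rw [h1]
  apply Nat.eq_of_mul_eq_mul_left
    (Nat.pos_of_ne_zero (Nat.card_pos (α := Subgroup.centralizer {x})).ne')
  calc Nat.card (Subgroup.centralizer {x}) * (MulAction.stabilizer (ConjAct G) x).index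
      = Nat.card (MulAction.stabilizer (ConjAct G) x) *
        (MulAction.stabilizer (ConjAct G) x).index := by rw [hc]
    _ = Nat.card (ConjAct G) := h3
    _ = Nat.card G := rfl
    _ = Nat.card (Subgroup.centralizer {x}) * (Subgroup.centralizer {x}).index := h2.symm

lemma relIndex_dvd_index_of_normal_right {G : Type*} [Group G] [Finite G]
    (H K : Subgroup G) [K.Normal] : H.relIndex K ∣ H.index := by
  have h1 : K.relIndex H * H.index = (H ⊓ K).index := by
    rw [← inf_relIndex_left]; exact relIndex_mul_index inf_le_left
  have h2 : H.relIndex K * K.index = (H ⊓ K).index := by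
    rw [← inf_relIndex_right]; exact relIndex_mul_index inf_le_right
  have h3 : K.relIndex H * (H ⊔ K).index = K.index := by
    rw [← relIndex_sup_right]; exact relIndex_mul_index le_sup_right
  have hne : K.relIndex H ≠ 0 := Subgroup.index_ne_zero_of_finite
  refine ⟨(H ⊔ K).index, ?_⟩
  apply Nat.eq_of_mul_eq_mul_left (Nat.pos_of_ne_zero hne)
  rw [h1, ← h2, ← h3]; ring

theorem sylow_class_size_of_Op_index (p : ℕ) [Fact p.Prime]
    (G : Type*) [Group G] [Finite G]
    (N : Subgroup G) (hNnormal : N.Normal) (hNp : IsPGroup p ↥N)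
    (hNmax : ∀ M : Subgroup G, M.Normal → IsPGroup p ↥M → M ≤ N)
    (P : Sylow p G) (a b : ℕ)
    (hindex : (N.subgroupOf (P : Subgroup G)).index ≤ p ^ b)
    (ha : ∀ x : G, ¬ p ^ (a + 1) ∣ Nat.card {y : G // IsConj x y}) :
    ∀ x : ↥(P : Subgroup G),
      Nat.card {y : ↥(P : Subgroup G) // IsConj x y} ≤ p ^ (a + b) := by
  have hNP : N ≤ (P : Subgroup G) := by
    obtain ⟨Q, hQ⟩ := hNp.exists_le_sylow
    obtain ⟨g, hg⟩ := MulAction.exists_smul_eq G Q P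
    intro n hn
    rw [← hg]
    have h1 : g⁻¹ * n * g⁻¹⁻¹ ∈ N := hNnormal.conj_mem n hn g⁻¹
    simpa [Sylow.smul_def, Sylow.pointwise_smul_def,
      Subgroup.mem_pointwise_smul_iff_inv_smul_mem] using hQ h1
  intro x
  have hC : (Subgroup.centralizer {x} : Subgroup ↥(P : Subgroup G))
      = (Subgroup.centralizer {(x : G)}).subgroupOf (P : Subgroup G) := by
    ext y
    simp only [Subgroup.mem_subgroupOf, Subgroup.mem_centralizer_iff,
      Set.mem_singleton_iff, forall_eq, Subtype.ext_iff, Subgroup.coe_mul]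
    exact ⟨fun H => H x rfl, fun H h hh => by
      obtain rfl : h = x := Subtype.ext hh; exact H⟩
  rw [conjClass_card_eq_index x]
  have hdvd1 : (Subgroup.centralizer {x}).index
      ∣ (Subgroup.centralizer {x} ⊓ N.subgroupOf (P : Subgroup G)).index :=
    Subgroup.index_dvd_of_le inf_le_left
  haveI : (N.subgroupOf (P : Subgroup G)).Normal := hNnormal.subgroupOf _
  have heq : (Subgroup.centralizer {x} ⊓ N.subgroupOf (P : Subgroup G)).relIndex
        (N.subgroupOf (P : Subgroup G)) * (N.subgroupOf (P : Subgroup G)).index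
      = (Subgroup.centralizer {x} ⊓ N.subgroupOf (P : Subgroup G)).index :=
    relIndex_mul_index inf_le_right
  have hr : (Subgroup.centralizer {x} ⊓ N.subgroupOf (P : Subgroup G)).relIndex
        (N.subgroupOf (P : Subgroup G))
      = (Subgroup.centralizer {(x : G)}).relIndex N := by
    rw [inf_relIndex_right, hC, relIndex_subgroupOf hNP]
  have hrdvd : (Subgroup.centralizer {(x : G)}).relIndex N
      ∣ (Subgroup.centralizer {(x : G)}).index :=
    relIndex_dvd_index_of_normal_right _ N
  have hclass : (Subgroup.centralizer {(x : G)}).index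
      = Nat.card {y : G // IsConj (x : G) y} := (conjClass_card_eq_index _).symm
  obtain ⟨k, hk⟩ := IsPGroup.iff_card.mp hNp
  have hrdvdN : (Subgroup.centralizer {(x : G)}).relIndex N ∣ p ^ k := by
    rw [← hk]
    exact Subgroup.index_dvd_card ((Subgroup.centralizer {(x : G)}).subgroupOf N)
  obtain ⟨m, hmk, hmr⟩ := (Nat.dvd_prime_pow (Fact.out : p.Prime)).mp hrdvdN
  have hma : m ≤ a := by
    by_contra h
    exact ha (x : G)
      (hclass ▸ dvd_trans (dvd_trans (pow_dvd_pow p (by omega)) hmr.symm.dvd) hrdvd)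
  have hra : (Subgroup.centralizer {(x : G)}).relIndex N ≤ p ^ a :=
    hmr ▸ Nat.pow_le_pow_right (Fact.out : p.Prime).pos hma
  calc (Subgroup.centralizer {x} : Subgroup ↥(P : Subgroup G)).index
      ≤ (Subgroup.centralizer {x} ⊓ N.subgroupOf (P : Subgroup G)).index :=
        Nat.le_of_dvd (Nat.pos_of_ne_zero Subgroup.index_ne_zero_of_finite) hdvd1
    _ = _ * (N.subgroupOf (P : Subgroup G)).index := heq.symm
    _ = (Subgroup.centralizer {(x : G)}).relIndex N
        * (N.subgroupOf (P : Subgroup G)).index := by rw [hr]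
    _ ≤ p ^ a * p ^ b := Nat.mul_le_mul hra hindex
    _ = p ^ (a + b) := (pow_add p a b).symm
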